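/- arXiv:1704.00813 — 2 statements merged into one kernel-verified Lean document; each statement's English description precedes it below -/
import Mathlib

section
/- Let A be Arnold's cat map on the torus 𝕋² = (ℝ/ℤ)², A(x, y) = (2x + y, x + y) mod 1, with μ the Haar probability measure on 𝕋², and let g₂ = χ_{2,1} + (1/2)·χ_{5,3} + (1/4)·χ_{13,8}. Then the autocovariance sequence of g₂ under the Koopman evolution equals the Fourier coefficients of the spectral density ρ(θ) = (1/2π)(21/16 + (5/4)cos θ + (1/2)cos 2θ): for every n ∈ ℕ, ∫_{𝕋²} g₂ · conj(g₂ ∘ A^n) dμ = (1/2π) ∫₀^{2π} cos(nθ)(21/16 + (5/4)cos θ + (1/2)cos 2θ) dθ; explicitly, the integral equals 21/16 for n = 0, equals 5/8 for n = 1, equals 1/4 for n = 2, and equals 0 for all n ≥ 3. -/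
open MeasureTheory

/-- The character `χ_{k,l}(x, y) = exp(2πi(kx + ly))` on the torus `𝕋² = (ℝ/ℤ)²`. -/
noncomputable def torusChar (k l : ℤ) (p : AddCircle (1 : ℝ) × AddCircle (1 : ℝ)) : ℂ :=
  (AddCircle.toCircle (k • p.1 + l • p.2) : ℂ)

/-- Arnold's cat map `A(x, y) = (2x + y, x + y) mod 1` on the torus `𝕋² = (ℝ/ℤ)²`. -/
noncomputable def catMap (p : AddCircle (1 : ℝ) × AddCircle (1 : ℝ)) :
    AddCircle (1 : ℝ) × AddCircle (1 : ℝ) :=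
  (2 • p.1 + p.2, p.1 + p.2)

/-- The observable `g₂ = χ_{2,1} + (1/2)χ_{5,3} + (1/4)χ_{13,8}` on the torus. -/
noncomputable def catObsTwo (p : AddCircle (1 : ℝ) × AddCircle (1 : ℝ)) : ℂ :=
  torusChar 2 1 p + (1 / 2 : ℂ) * torusChar 5 3 p + (1 / 4 : ℂ) * torusChar 13 8 p

section Aux

open Complex Real AddCircle

local instance : Fact ((0:ℝ) < 1) := ⟨one_pos⟩

lemma integral_fourier_unit (m : ℤ) :
    ∫ x : AddCircle (1:ℝ), (fourier m x : ℂ) ∂volume = if m = 0 then 1 else 0 := by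
  have hv : (volume : Measure (AddCircle (1:ℝ))) = haarAddCircle := by
    rw [volume_eq_smul_haarAddCircle]; simp
  rw [hv]
  rcases eq_or_ne m 0 with h | h
  · simp [h, fourier_zero]
  · rw [if_neg h]
    exact integral_eq_zero_of_add_right_eq_neg (fourier_add_half_inv_index h one_pos)

lemma torusChar_eq (k l : ℤ) (p : AddCircle (1 : ℝ) × AddCircle (1 : ℝ)) :
    torusChar k l p = (fourier k p.1 : ℂ) * (fourier l p.2 : ℂ) := by
  simp [torusChar, AddCircle.toCircle_add, fourier_apply]

lemma torusChar_mul_conj (k l k' l' : ℤ) (p : AddCircle (1 : ℝ) × AddCircle (1 : ℝ)) :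
    torusChar k l p * (starRingEnd ℂ) (torusChar k' l' p) = torusChar (k - k') (l - l') p := by
  simp only [torusChar_eq, map_mul, ← fourier_neg, sub_eq_add_neg, fourier_add]
  ring

lemma torusChar_catMap (k l : ℤ) (p : AddCircle (1 : ℝ) × AddCircle (1 : ℝ)) :
    torusChar k l (catMap p) = torusChar (2 * k + l) (k + l) p := by
  unfold torusChar catMap
  have h : k • ((2:ℕ) • p.1 + p.2) + l • (p.1 + p.2)
      = (2 * k + l) • p.1 + (k + l) • p.2 := by
    have h2 : ((2:ℕ) • p.1 : AddCircle (1:ℝ)) = (2:ℤ) • p.1 := by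
      rw [← Nat.cast_smul_eq_nsmul ℤ 2 p.1]; norm_num
    rw [h2, smul_add, smul_add, smul_smul, mul_comm k 2, add_smul, add_smul]
    abel
  rw [h]

lemma torusChar_continuous (k l : ℤ) : Continuous (torusChar k l) := by
  have : torusChar k l = fun p : AddCircle (1:ℝ) × AddCircle (1:ℝ) =>
      (fourier k p.1 : ℂ) * (fourier l p.2 : ℂ) := funext (torusChar_eq k l)
  rw [this]
  exact ((fourier k).continuous.comp continuous_fst).mul
    ((fourier l).continuous.comp continuous_snd)

lemma torusChar_integrable (k l : ℤ) :
    Integrable (torusChar k l) (volume : Measure (AddCircle (1:ℝ) × AddCircle (1:ℝ))) := by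
  refine (integrable_const (1:ℝ)).mono' (torusChar_continuous k l).aestronglyMeasurable ?_
  filter_upwards with p
  simp [torusChar, Circle.norm_coe]

lemma torusChar_integral (k l : ℤ) :
    ∫ p, torusChar k l p ∂(volume : Measure (AddCircle (1:ℝ) × AddCircle (1:ℝ))) =
      if k = 0 ∧ l = 0 then 1 else 0 := by
  rw [Measure.volume_eq_prod]
  simp only [torusChar_eq]
  rw [integral_prod_mul (f := fun x : AddCircle (1:ℝ) => (fourier k x : ℂ))
    (g := fun y : AddCircle (1:ℝ) => (fourier l y : ℂ)), integral_fourier_unit,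
    integral_fourier_unit]
  split_ifs with h1 h2 h3 <;> simp_all

/-- The sequence of Fourier frequency vectors traversed by the cat map. -/
def catVec : ℕ → ℤ × ℤ
  | 0 => (2, 1)
  | n+1 => (2 * (catVec n).1 + (catVec n).2, (catVec n).1 + (catVec n).2)

lemma catVec_pos (n : ℕ) : 0 < (catVec n).2 ∧ (catVec n).2 < (catVec n).1 := by
  induction n with
  | zero => constructor <;> norm_num [catVec]
  | succ n ih => simp only [catVec]; omega

lemma catVec_fst_strictMono : StrictMono fun n => (catVec n).1 := by
  apply strictMono_nat_of_lt_succ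
  intro n
  have := catVec_pos n
  simp only [catVec]
  omega

lemma catVec_eq_iff {a b : ℕ} :
    ((catVec a).1 = (catVec b).1 ∧ (catVec a).2 = (catVec b).2) ↔ a = b := by
  constructor
  · rintro ⟨h1, -⟩
    exact catVec_fst_strictMono.injective h1
  · rintro rfl; exact ⟨rfl, rfl⟩

/-- The character attached to the `m`-th frequency vector. -/
noncomputable def tc (m : ℕ) : AddCircle (1:ℝ) × AddCircle (1:ℝ) → ℂ :=
  torusChar (catVec m).1 (catVec m).2

lemma tc_orth (a b : ℕ) :
    ∫ p, tc a p * (starRingEnd ℂ) (tc b p)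
      ∂(volume : Measure (AddCircle (1:ℝ) × AddCircle (1:ℝ))) =
      if a = b then 1 else 0 := by
  unfold tc
  simp only [torusChar_mul_conj]
  rw [torusChar_integral]
  simp only [sub_eq_zero, catVec_eq_iff]

lemma tc_catMap (m : ℕ) (p : AddCircle (1:ℝ) × AddCircle (1:ℝ)) :
    tc m (catMap p) = tc (m+1) p := by
  unfold tc
  rw [torusChar_catMap]
  rfl

lemma tc_iter (n m : ℕ) (p : AddCircle (1:ℝ) × AddCircle (1:ℝ)) :
    tc m (catMap^[n] p) = tc (m+n) p := by
  induction n generalizing p with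
  | zero => rfl
  | succ n ih =>
    rw [Function.iterate_succ_apply, ih, tc_catMap, Nat.add_assoc]

lemma catObs_eq (p : AddCircle (1:ℝ) × AddCircle (1:ℝ)) :
    catObsTwo p = tc 0 p + (1/2 : ℂ) * tc 1 p + (1/4 : ℂ) * tc 2 p := by
  have h1 : catVec 1 = (5, 3) := by norm_num [catVec]
  have h2 : catVec 2 = (13, 8) := by norm_num [catVec]
  simp [catObsTwo, tc, catVec, h1, h2]

lemma catObs_iter (n : ℕ) (p : AddCircle (1:ℝ) × AddCircle (1:ℝ)) :
    catObsTwo (catMap^[n] p) = tc n p + (1/2 : ℂ) * tc (n+1) p + (1/4 : ℂ) * tc (n+2) p := by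
  rw [catObs_eq, tc_iter, tc_iter, tc_iter]
  norm_num [Nat.add_comm]

lemma tc_pair_integrable (c : ℂ) (a b : ℕ) :
    Integrable (fun p => c * (tc a p * (starRingEnd ℂ) (tc b p)))
      (volume : Measure (AddCircle (1:ℝ) × AddCircle (1:ℝ))) := by
  have h : (fun p => tc a p * (starRingEnd ℂ) (tc b p))
      = torusChar ((catVec a).1 - (catVec b).1) ((catVec a).2 - (catVec b).2) :=
    funext fun p => torusChar_mul_conj _ _ _ _ p
  have := (torusChar_integrable ((catVec a).1 - (catVec b).1)
    ((catVec a).2 - (catVec b).2)).const_mul c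
  rwa [← h] at this

lemma main_integral (n : ℕ) :
    ∫ p, catObsTwo p * (starRingEnd ℂ) (catObsTwo (catMap^[n] p)) ∂volume =
      if n = 0 then (21/16 : ℂ) else if n = 1 then 5/8 else if n = 2 then 1/4 else 0 := by
  have hpt : ∀ p : AddCircle (1:ℝ) × AddCircle (1:ℝ),
      catObsTwo p * (starRingEnd ℂ) (catObsTwo (catMap^[n] p)) =
      ∑ i ∈ Finset.range 3, ∑ j ∈ Finset.range 3,
        ((1/2 : ℂ)^i * (1/2 : ℂ)^j) * (tc i p * (starRingEnd ℂ) (tc (n+j) p)) := by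
    intro p
    rw [catObs_eq, catObs_iter]
    simp only [Finset.sum_range_succ, Finset.sum_range_zero, map_add, map_mul, map_one,
      map_div₀, map_ofNat, pow_succ, pow_zero]
    ring
  simp only [hpt]
  rw [integral_finset_sum _ (fun i _ => integrable_finset_sum _ (fun j _ =>
    tc_pair_integrable _ _ _))]
  have : ∀ i ∈ Finset.range 3,
      (∫ p, ∑ j ∈ Finset.range 3,
        ((1/2 : ℂ)^i * (1/2 : ℂ)^j) * (tc i p * (starRingEnd ℂ) (tc (n+j) p)) ∂volume)
      = ∑ j ∈ Finset.range 3, ((1/2 : ℂ)^i * (1/2 : ℂ)^j) * (if i = n + j then 1 else 0) := by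
    intro i _
    rw [integral_finset_sum _ (fun j _ => tc_pair_integrable _ _ _)]
    refine Finset.sum_congr rfl fun j _ => ?_
    rw [integral_const_mul, tc_orth]
  rw [Finset.sum_congr rfl this]
  rcases n with (_|_|_|n)
  · norm_num [Finset.sum_range_succ]
  · norm_num [Finset.sum_range_succ]
  · norm_num [Finset.sum_range_succ]
  · rw [if_neg (by omega), if_neg (by omega), if_neg (by omega)]
    refine Finset.sum_eq_zero fun i hi => Finset.sum_eq_zero fun j hj => ?_
    rw [if_neg (by simp only [Finset.mem_range] at hi; omega), mul_zero]

lemma integral_cos_int (m : ℤ) :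
    ∫ θ in (0:ℝ)..(2*π), Real.cos (m*θ) = if m = 0 then 2*π else 0 := by
  rcases eq_or_ne m 0 with h | h
  · simp [h]
  · rw [if_neg h]
    have hm : (m:ℝ) ≠ 0 := Int.cast_ne_zero.mpr h
    have key : ((m:ℝ) * ∫ θ in (0:ℝ)..(2*π), Real.cos ((m:ℝ)*θ))
        = ∫ x in ((m:ℝ)*0)..((m:ℝ)*(2*π)), Real.cos x :=
      intervalIntegral.mul_integral_comp_mul_left (f := Real.cos) (m:ℝ)
    rw [integral_cos, mul_zero, Real.sin_zero,
      show (m:ℝ)*(2*π) = ((2*m:ℤ):ℝ)*π by push_cast; ring, Real.sin_int_mul_pi, sub_zero] at key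
    exact (mul_eq_zero.mp key).resolve_left hm

lemma rhs_eval (n : ℕ) :
    (1 / (2 * π)) *
      ∫ θ in (0:ℝ)..(2*π),
        Real.cos (n * θ) * (21 / 16 + (5 / 4) * Real.cos θ + (1 / 2) * Real.cos (2 * θ))
    = if n = 0 then 21/16 else if n = 1 then 5/8 else if n = 2 then 1/4 else 0 := by
  have hpt : ∀ θ : ℝ,
      Real.cos (n * θ) * (21 / 16 + (5 / 4) * Real.cos θ + (1 / 2) * Real.cos (2 * θ))
      = 21/16 * Real.cos (((n:ℤ):ℝ)*θ) + 5/8 * Real.cos ((((n:ℤ)+1 : ℤ):ℝ)*θ)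
        + 5/8 * Real.cos ((((n:ℤ)-1 : ℤ):ℝ)*θ) + 1/4 * Real.cos ((((n:ℤ)+2 : ℤ):ℝ)*θ)
        + 1/4 * Real.cos ((((n:ℤ)-2 : ℤ):ℝ)*θ) := by
    intro θ
    push_cast
    rw [show ((n:ℝ)+1)*θ = n*θ + θ by ring, Real.cos_add,
      show ((n:ℝ)-1)*θ = n*θ - θ by ring, Real.cos_sub,
      show ((n:ℝ)+2)*θ = n*θ + 2*θ by ring, Real.cos_add,
      show ((n:ℝ)-2)*θ = n*θ - 2*θ by ring, Real.cos_sub, Real.cos_two_mul, Real.sin_two_mul]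
    nlinarith [Real.sin_sq_add_cos_sq θ]
  have hii : ∀ (c : ℝ) (m : ℤ), IntervalIntegrable (fun θ : ℝ => c * Real.cos ((m:ℝ)*θ))
      volume (0:ℝ) (2*π) := fun c m =>
    (continuous_const.mul
      (Real.continuous_cos.comp (continuous_const.mul continuous_id))).intervalIntegrable _ _
  rw [intervalIntegral.integral_congr (fun θ _ => hpt θ)]
  rw [intervalIntegral.integral_add (((((hii _ _).add (hii _ _)).add (hii _ _)).add (hii _ _)))
      (hii _ _),
    intervalIntegral.integral_add ((((hii _ _).add (hii _ _)).add (hii _ _))) (hii _ _),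
    intervalIntegral.integral_add (((hii _ _).add (hii _ _))) (hii _ _),
    intervalIntegral.integral_add (hii _ _) (hii _ _)]
  simp only [intervalIntegral.integral_const_mul, integral_cos_int]
  have hπ : π ≠ 0 := Real.pi_ne_zero
  rcases n with (_|_|_|n)
  · norm_num; field_simp
  · norm_num; field_simp
  · norm_num; field_simp
  · have h1 : ¬((n:ℤ) + 1 + 1 + 1 = 0) := by omega
    have h2 : ¬((n:ℤ) + 1 + 1 + 1 + 1 = 0) := by omega
    have h3 : ¬((n:ℤ) + 1 + 1 = 0) := by omega
    have h4 : ¬((n:ℤ) + 1 + 1 + 1 + 2 = 0) := by omega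
    have h5 : ¬((n:ℤ) + 1 + 1 + 1 - 2 = 0) := by omega
    have h6 : ¬(n + 1 + 1 + 1 = 2) := by omega
    norm_num [h1, h2, h3, h4, h5, h6]

end Aux

/-- For the observable `g₂ = χ_{2,1} + (1/2)χ_{5,3} + (1/4)χ_{13,8}` on the torus (with Haar
probability measure `volume`), the autocovariance sequence under Arnold's cat map equals
the Fourier coefficients of the spectral density
`ρ(θ) = (1/2π)(21/16 + (5/4)cos θ + (1/2)cos 2θ)`; explicitly it is `21/16` at lag `0`,
`5/8` at lag `1`, `1/4` at lag `2`, and `0` at all lags `n ≥ 3`. -/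
theorem catMap_autocovariance_g2 :
    (∀ n : ℕ,
      ∫ p, catObsTwo p * (starRingEnd ℂ) (catObsTwo (catMap^[n] p)) ∂volume =
        (((1 / (2 * Real.pi)) *
          ∫ θ in (0 : ℝ)..(2 * Real.pi),
            Real.cos (n * θ) * (21 / 16 + (5 / 4) * Real.cos θ + (1 / 2) * Real.cos (2 * θ)) :
          ℝ) : ℂ)) ∧
    (∀ n : ℕ,
      (n = 0 →
        ∫ p, catObsTwo p * (starRingEnd ℂ) (catObsTwo (catMap^[n] p)) ∂volume = 21 / 16) ∧
      (n = 1 →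
        ∫ p, catObsTwo p * (starRingEnd ℂ) (catObsTwo (catMap^[n] p)) ∂volume = 5 / 8) ∧
      (n = 2 →
        ∫ p, catObsTwo p * (starRingEnd ℂ) (catObsTwo (catMap^[n] p)) ∂volume = 1 / 4) ∧
      (3 ≤ n →
        ∫ p, catObsTwo p * (starRingEnd ℂ) (catObsTwo (catMap^[n] p)) ∂volume = 0)) := by
  constructor
  · intro n
    rw [main_integral n, rhs_eval n]
    split_ifs <;> norm_num
  · intro n
    refine ⟨?_, ?_, ?_, ?_⟩ <;> intro h <;> rw [main_integral n]
    · simp [h]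
    · simp [h]
    · simp [h]
    · rw [if_neg (by omega), if_neg (by omega), if_neg (by omega)]
end

section
/- Let f : ℝ → ℂ be continuous and 2π-periodic, let ω > 0, j ∈ ℤ, and a ∈ ℝ. Then the harmonic average at frequency jω of the traveling-wave signal t ↦ f(ωt − a) exists and equals e^{-ija} · ĉ_j, where ĉ_j = (1/2π) ∫₀^{2π} f(s) e^{-ijs} ds is the j-th Fourier coefficient of f: that is, (1/T) ∫₀^T f(ωt − a) e^{-ijωt} dt → e^{-ija} ĉ_j as T → ∞. In particular, taking a = 2πkx, the Koopman mode at frequency jω of a traveling wave f(ωt − 2πkx) is the spatial profile x ↦ ĉ_j e^{-2πijkx}, so the mode at the j-th harmonic of the basic frequency carries the j-th multiple of the basic wave number k. -/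
open Filter intervalIntegral

open MeasureTheory in
/-- Average of a continuous periodic function over `[0, T]` tends to its mean. -/
lemma periodic_average_aux (h : ℝ → ℂ) (hc : Continuous h) (p : ℝ) (hp : 0 < p)
    (hper : Function.Periodic h p) :
    Tendsto (fun T : ℝ => (1 / (T : ℂ)) * ∫ t in (0:ℝ)..T, h t) atTop
      (nhds ((1 / (p : ℂ)) * ∫ t in (0:ℝ)..p, h t)) := by
  have h_int : ∀ a b : ℝ, IntervalIntegrable h volume a b :=
    fun a b => hc.intervalIntegrable a b
  set I : ℂ := ∫ t in (0:ℝ)..p, h t with hI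
  obtain ⟨M, hM⟩ := (isCompact_Icc (a := (0:ℝ)) (b := p)).exists_bound_of_continuousOn
    hc.continuousOn
  have hM0 : 0 ≤ M := le_trans (norm_nonneg _) (hM 0 ⟨le_refl 0, hp.le⟩)
  have key : ∀ T : ℝ, 0 < T →
      ‖(1 / (T : ℂ)) * (∫ t in (0:ℝ)..T, h t) - (1 / (p : ℂ)) * I‖ ≤ (M * p + ‖I‖) / T := by
    intro T hT
    set n : ℤ := ⌊T / p⌋ with hn
    set ε : ℝ := Int.fract (T / p) * p with hε
    have hε0 : 0 ≤ ε := mul_nonneg (Int.fract_nonneg _) hp.le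
    have hεp : ε ≤ p := by
      have h1 : Int.fract (T / p) ≤ 1 := (Int.fract_lt_one _).le
      nlinarith
    have hT_eq : ε + n • p = T := Int.fract_div_mul_self_add_zsmul_eq p T hp.ne'
    have hsplit : (∫ t in (0:ℝ)..T, h t) = (∫ t in (0:ℝ)..ε, h t) + (n : ℂ) * I := by
      rw [← hT_eq, ← integral_add_adjacent_intervals (h_int 0 ε) (h_int ε (ε + n • p)),
        hper.intervalIntegral_add_zsmul_eq n ε h_int, hper.intervalIntegral_add_eq ε 0, zero_add,
        zsmul_eq_mul]
    have hR : ‖∫ t in (0:ℝ)..ε, h t‖ ≤ M * p := by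
      have hb : ∀ x ∈ Set.uIoc (0:ℝ) ε, ‖h x‖ ≤ M := by
        intro x hx
        rw [Set.uIoc_of_le hε0] at hx
        exact hM x ⟨hx.1.le, hx.2.trans hεp⟩
      calc ‖∫ t in (0:ℝ)..ε, h t‖ ≤ M * |ε - 0| :=
            intervalIntegral.norm_integral_le_of_norm_le_const hb
        _ ≤ M * p := by rw [sub_zero, abs_of_nonneg hε0]; nlinarith
    have hnp : (n : ℝ) * p - T = -ε := by
      have h2 : ε + (n : ℝ) * p = T := by rw [← hT_eq]; push_cast [zsmul_eq_mul]; ring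
      linarith
    have hcoef : ‖(n : ℂ) / (T : ℂ) - 1 / (p : ℂ)‖ ≤ 1 / T := by
      have hT' : (T:ℂ) ≠ 0 := Complex.ofReal_ne_zero.mpr hT.ne'
      have hp' : (p:ℂ) ≠ 0 := Complex.ofReal_ne_zero.mpr hp.ne'
      have heq : ((n : ℂ) / (T : ℂ) - 1 / (p : ℂ)) = ((((n:ℝ) * p - T) / (T * p) : ℝ) : ℂ) := by
        push_cast
        field_simp
      rw [heq, Complex.norm_real, Real.norm_eq_abs, hnp, abs_div, abs_neg,
        abs_of_nonneg hε0, abs_of_pos (mul_pos hT hp), div_le_div_iff₀ (mul_pos hT hp) hT]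
      nlinarith
    have hdiff : (1 / (T : ℂ)) * (∫ t in (0:ℝ)..T, h t) - (1 / (p : ℂ)) * I
        = (1 / (T : ℂ)) * (∫ t in (0:ℝ)..ε, h t) + ((n : ℂ) / T - 1 / p) * I := by
      rw [hsplit]; ring
    rw [hdiff]
    have h1 : ‖(1 / (T : ℂ))‖ = 1 / T := by
      rw [norm_div, norm_one, Complex.norm_real, Real.norm_eq_abs, abs_of_pos hT]
    calc ‖(1 / (T : ℂ)) * (∫ t in (0:ℝ)..ε, h t) + ((n : ℂ) / T - 1 / p) * I‖
        ≤ ‖(1 / (T : ℂ)) * (∫ t in (0:ℝ)..ε, h t)‖ + ‖((n : ℂ) / T - 1 / p) * I‖ :=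
          norm_add_le _ _
      _ ≤ (1 / T) * (M * p) + (1 / T) * ‖I‖ := by
          rw [norm_mul, norm_mul, h1]
          exact add_le_add (mul_le_mul_of_nonneg_left hR (by positivity))
            (mul_le_mul_of_nonneg_right hcoef (norm_nonneg I))
      _ = (M * p + ‖I‖) / T := by ring
  have htend : Tendsto (fun T : ℝ => (M * p + ‖I‖) / T) atTop (nhds 0) :=
    Tendsto.div_atTop tendsto_const_nhds tendsto_id
  have hsq := squeeze_zero_norm'
    (f := fun T : ℝ => (1 / (T : ℂ)) * (∫ t in (0:ℝ)..T, h t) - (1 / (p : ℂ)) * I)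
    (a := fun T : ℝ => (M * p + ‖I‖) / T)
    (eventually_atTop.mpr ⟨1, fun T hT => key T (lt_of_lt_of_le one_pos hT)⟩) htend
  exact tendsto_sub_nhds_zero_iff.mp hsq

/-- The Koopman mode of a traveling wave: for `f` continuous and `2π`-periodic, `ω > 0`,
`j ∈ ℤ` and `a ∈ ℝ`, the harmonic average at frequency `jω` of the signal
`t ↦ f(ωt − a)` exists and equals `e^{-ija} ĉ_j`, where
`ĉ_j = (1/2π) ∫₀^{2π} f(s) e^{-ijs} ds` is the `j`-th Fourier coefficient of `f`.
(Taking `a = 2πkx`, the Koopman mode at the `j`-th harmonic of the basic frequency is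
`x ↦ ĉ_j e^{-2πijkx}`, carrying the `j`-th multiple of the basic wave number.) -/
theorem harmonic_average_of_traveling_wave
    (f : ℝ → ℂ) (hf_cont : Continuous f) (hf_per : Function.Periodic f (2 * Real.pi))
    (ω : ℝ) (hω : 0 < ω) (j : ℤ) (a : ℝ) :
    Tendsto
      (fun T : ℝ => (1 / (T : ℂ)) *
        ∫ t in (0 : ℝ)..T, f (ω * t - a) * Complex.exp (-((j : ℝ) * ω * t) * Complex.I))
      atTop
      (nhds (Complex.exp (-((j : ℝ) * a) * Complex.I) *
        ((1 / (2 * Real.pi : ℂ)) *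
          ∫ s in (0 : ℝ)..(2 * Real.pi), f s * Complex.exp (-((j : ℝ) * s) * Complex.I)))) := by
  set g : ℝ → ℂ := fun s => f s * Complex.exp (-((j : ℝ) * s) * Complex.I) with hg
  have hg_cont : Continuous g := by
    apply hf_cont.mul
    exact Complex.continuous_exp.comp (by continuity)
  have hg_per : Function.Periodic g (2 * Real.pi) := by
    intro s
    simp only [hg]
    rw [hf_per s]
    congr 1
    push_cast
    have harg : (-((j : ℂ) * ((s:ℂ) + 2 * (Real.pi:ℂ))) * Complex.I : ℂ)
        = -((j : ℂ) * s) * Complex.I + (-j : ℤ) * (2 * (Real.pi:ℂ) * Complex.I) := by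
      push_cast; ring
    rw [harg, Complex.exp_add, Complex.exp_int_mul_two_pi_mul_I, mul_one]
  set H : ℝ → ℂ := fun t => g (ω * t - a) with hH
  have hH_cont : Continuous H := hg_cont.comp (by continuity)
  have hp : (0:ℝ) < 2 * Real.pi / ω := by positivity
  have hH_per : Function.Periodic H (2 * Real.pi / ω) := by
    intro t
    simp only [hH]
    have harg : ω * (t + 2 * Real.pi / ω) - a = (ω * t - a) + 2 * Real.pi := by
      field_simp; ring
    rw [harg, hg_per]
  have base := periodic_average_aux H hH_cont _ hp hH_per
  have hval : (1 / ((2 * Real.pi / ω : ℝ) : ℂ)) * (∫ t in (0:ℝ)..(2 * Real.pi / ω), H t)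
      = (1 / (2 * Real.pi : ℂ)) * ∫ s in (0:ℝ)..(2 * Real.pi), g s := by
    have h1 : (∫ t in (0:ℝ)..(2 * Real.pi / ω), H t)
        = ω⁻¹ • ∫ u in (0:ℝ)..(2 * Real.pi), g (u - a) := by
      have hcomp := intervalIntegral.integral_comp_mul_left (a := (0:ℝ))
        (b := 2 * Real.pi / ω) (f := fun u => g (u - a)) hω.ne'
      simp only [mul_zero, mul_div_cancel₀ _ hω.ne'] at hcomp
      exact hcomp
    have h2 : (∫ u in (0:ℝ)..(2 * Real.pi), g (u - a))
        = ∫ s in (0:ℝ)..(2 * Real.pi), g s := by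
      rw [intervalIntegral.integral_comp_sub_right g a, zero_sub]
      have h3 := hg_per.intervalIntegral_add_eq (-a) 0
      rw [zero_add] at h3
      rw [show 2 * Real.pi - a = -a + 2 * Real.pi by ring, h3]
    rw [h1, h2, Complex.real_smul, ← mul_assoc]
    congr 1
    have hπ : (Real.pi : ℝ) ≠ 0 := Real.pi_ne_zero
    have hω' : (ω:ℂ) ≠ 0 := Complex.ofReal_ne_zero.mpr hω.ne'
    have hπ' : ((Real.pi:ℝ):ℂ) ≠ 0 := Complex.ofReal_ne_zero.mpr hπ
    push_cast
    field_simp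
  rw [hval] at base
  have hfun : ∀ T : ℝ, (1 / (T : ℂ)) *
      (∫ t in (0 : ℝ)..T, f (ω * t - a) * Complex.exp (-((j : ℝ) * ω * t) * Complex.I))
      = Complex.exp (-((j : ℝ) * a) * Complex.I) * ((1 / (T : ℂ)) * ∫ t in (0:ℝ)..T, H t) := by
    intro T
    have hInt : (∫ t in (0 : ℝ)..T, f (ω * t - a) * Complex.exp (-((j : ℝ) * ω * t) * Complex.I))
        = Complex.exp (-((j : ℝ) * a) * Complex.I) * ∫ t in (0:ℝ)..T, H t := by
      rw [← intervalIntegral.integral_const_mul]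
      apply intervalIntegral.integral_congr
      intro t _
      show f (ω * t - a) * Complex.exp (-((j : ℝ) * ω * t) * Complex.I)
          = Complex.exp (-((j : ℝ) * a) * Complex.I) * (f (ω * t - a) *
            Complex.exp (-(((j : ℝ) : ℂ) * ((ω * t - a : ℝ) : ℂ)) * Complex.I))
      have harg : (-((j : ℝ) * ω * t) * Complex.I : ℂ)
          = -((j:ℝ) * a) * Complex.I + -(((j : ℝ) : ℂ) * ((ω * t - a : ℝ) : ℂ)) * Complex.I := by
        push_cast; ring
      rw [harg, Complex.exp_add]; ring
    rw [hInt]; ring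
  exact Tendsto.congr (fun T => (hfun T).symm)
    (base.const_mul (Complex.exp (-((j : ℝ) * a) * Complex.I)))
end
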